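/- (Lemme 6) Let k be a finite field of odd characteristic and let ε ∈ k be nonzero. If it is not the case that both card k = 3 and ε = 1, then there exists ξ ∈ k, ξ ≠ 0, such that ξ² − ε is not a square in k. -/

import Mathlib

open Finset

/-- (Lemme 6) For a finite field `k` of odd characteristic and nonzero `ε ∈ k`, unless
`k = 𝔽₃` and `ε = 1`, there is a nonzero `ξ ∈ k` with `ξ² − ε` a non-square. -/
theorem lemme6 {k : Type*} [Field k] [Fintype k] (hchar : ringChar k ≠ 2)
    (ε : k) (hε : ε ≠ 0) (hexc : ¬ (Fintype.card k = 3 ∧ ε = 1)) :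
    ∃ ξ : k, ξ ≠ 0 ∧ ¬ IsSquare (ξ ^ 2 - ε) := by
  classical
  by_contra hcon
  push_neg at hcon
  have h2 : (2 : k) ≠ 0 := Ring.two_ne_zero hchar
  set S : Finset (k × k) := univ.filter (fun p : k × k => p.1 ^ 2 - p.2 ^ 2 = ε) with hSdef
  -- The conic x² - y² = ε has exactly q - 1 points.
  have hScard : S.card = (univ.erase (0 : k)).card := by
    apply card_nbij' (fun p => p.1 + p.2) (fun u => ((u + ε / u) / 2, (u - ε / u) / 2))
    · intro p hp
      simp only [mem_coe, hSdef, mem_filter, mem_univ, true_and] at hp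
      simp only [mem_coe, mem_erase, mem_univ, and_true]
      intro h0
      apply hε
      have : ε = (p.1 + p.2) * (p.1 - p.2) := by rw [← hp]; ring
      rw [this, h0, zero_mul]
    · intro u hu
      simp only [mem_coe, mem_erase, mem_univ, and_true] at hu
      simp only [mem_coe, hSdef, mem_filter, mem_univ, true_and]
      field_simp
      ring
    · intro p hp
      simp only [mem_coe, hSdef, mem_filter, mem_univ, true_and] at hp
      have hu : p.1 + p.2 ≠ 0 := by
        intro h0
        apply hε
        have : ε = (p.1 + p.2) * (p.1 - p.2) := by rw [← hp]; ring
        rw [this, h0, zero_mul]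
      have hdiv : ε / (p.1 + p.2) = p.1 - p.2 := by
        rw [div_eq_iff hu, ← hp]; ring
      ext
      · simp only [hdiv]; field_simp; ring
      · simp only [hdiv]; field_simp; ring
    · intro u hu
      simp only [mem_coe, mem_erase, mem_univ, and_true] at hu
      field_simp
      ring
  -- Fiberwise count: fibers over x correspond to solutions of y² = x² - ε.
  have hfiber : ∀ x : k, (S.filter fun p => p.1 = x).card
      = (univ.filter fun y : k => y ^ 2 = x ^ 2 - ε).card := by
    intro x
    apply card_nbij' (fun p => p.2) (fun y => (x, y))
    · intro p hp
      simp only [mem_coe, hSdef, mem_filter, mem_univ, true_and] at hp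
      obtain ⟨h1, h2'⟩ := hp
      subst h2'
      simp only [mem_coe, mem_filter, mem_univ, true_and]
      linear_combination -h1
    · intro y hy
      simp only [mem_coe, mem_filter, mem_univ, true_and] at hy ⊢
      simp only [mem_coe, hSdef, mem_filter, mem_univ, true_and]
      constructor
      · rw [hy]; ring
      · trivial
    · intro p hp
      simp only [mem_coe, mem_filter] at hp
      ext
      · exact hp.2.symm
      · rfl
    · intro y _; rfl
  have hsum1 : S.card = ∑ x : k, (univ.filter fun y : k => y ^ 2 = x ^ 2 - ε).card := by
    rw [card_eq_sum_card_fiberwise (f := Prod.fst) (t := univ) (fun p _ => mem_univ _)]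
    exact Finset.sum_congr rfl fun x _ => hfiber x
  have hq : ∀ x : k, ((univ.filter fun y : k => y ^ 2 = x ^ 2 - ε).card : ℤ)
      = quadraticChar k (x ^ 2 - ε) + 1 := by
    intro x
    have h := quadraticChar_card_sqrts hchar (x ^ 2 - ε)
    have hset : {y : k | y ^ 2 = x ^ 2 - ε}.toFinset
        = univ.filter fun y : k => y ^ 2 = x ^ 2 - ε := by
      ext y; simp
    rwa [hset] at h
  -- The character sum is -1.
  have key : ∑ x : k, quadraticChar k (x ^ 2 - ε) = -1 := by
    have h1 : ((S.card : ℤ)) = ∑ x : k, (quadraticChar k (x ^ 2 - ε) + 1) := by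
      rw [hsum1]
      push_cast
      exact Finset.sum_congr rfl fun x _ => hq x
    rw [Finset.sum_add_distrib, Finset.sum_const, card_univ, nsmul_eq_mul, mul_one] at h1
    have h2' : (S.card : ℤ) = (Fintype.card k : ℤ) - 1 := by
      rw [hScard, card_erase_of_mem (mem_univ _), card_univ]
      have hpos : 1 ≤ Fintype.card k := Fintype.card_pos
      omega
    rw [h2'] at h1
    linarith
  -- Split off the ξ = 0 term.
  rw [← Finset.add_sum_erase univ _ (mem_univ (0 : k))] at key
  have hzero : (0 : k) ^ 2 - ε = -ε := by ring
  rw [hzero] at key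
  have hterm : ∀ ξ ∈ univ.erase (0 : k), 0 ≤ quadraticChar k (ξ ^ 2 - ε) := by
    intro ξ hξ
    rw [mem_erase] at hξ
    by_cases h0 : ξ ^ 2 - ε = 0
    · simp [h0]
    · rw [(quadraticChar_one_iff_isSquare h0).mpr (hcon ξ hξ.1)]
      exact zero_le_one
  have hsum_nonneg : 0 ≤ ∑ ξ ∈ univ.erase (0 : k), quadraticChar k (ξ ^ 2 - ε) :=
    Finset.sum_nonneg hterm
  have hneg : -1 ≤ quadraticChar k (-ε) := by
    rcases quadraticChar_dichotomy (a := -ε) (neg_ne_zero.mpr hε) with h | h <;> simp [h]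
  have hsum_zero : ∑ ξ ∈ univ.erase (0 : k), quadraticChar k (ξ ^ 2 - ε) = 0 := by linarith
  have hall : ∀ ξ : k, ξ ≠ 0 → ξ ^ 2 = ε := by
    intro ξ hξ
    have := (Finset.sum_eq_zero_iff_of_nonneg hterm).mp hsum_zero ξ
      (by rw [mem_erase]; exact ⟨hξ, mem_univ _⟩)
    have h0 : ξ ^ 2 - ε = 0 := quadraticChar_eq_zero_iff.mp this
    exact sub_eq_zero.mp h0
  have hε1 : ε = 1 := by
    have := hall 1 one_ne_zero
    simpa using this.symm
  -- Every element of k lies in {0, 1, -1}.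
  have hsubset : (univ : Finset k) ⊆ {0, 1, -1} := by
    intro x _
    simp only [mem_insert, mem_singleton]
    by_cases hx : x = 0
    · exact Or.inl hx
    · have hx2 : x ^ 2 = 1 := by rw [hall x hx, hε1]
      have : x * x = 1 := by rw [← sq]; exact hx2
      rcases mul_self_eq_one_iff.mp this with h | h
      · exact Or.inr (Or.inl h)
      · exact Or.inr (Or.inr h)
  have hne : (1 : k) ≠ -1 := by
    intro h
    apply Ring.neg_one_ne_one_of_char_ne_two hchar
    exact h.symm
  have hcard3 : ({0, 1, -1} : Finset k).card = 3 := by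
    rw [card_insert_of_notMem, card_insert_of_notMem, card_singleton]
    · simp only [mem_singleton]
      exact hne
    · simp only [mem_insert, mem_singleton]
      push_neg
      exact ⟨fun h => one_ne_zero h.symm, fun h => (neg_ne_zero.mpr one_ne_zero) h.symm⟩
  have hle : Fintype.card k ≤ 3 := by
    rw [← card_univ, ← hcard3]
    exact Finset.card_le_card hsubset
  have hge : 3 ≤ Fintype.card k := by
    rw [← hcard3, ← card_univ]
    exact Finset.card_le_card (subset_univ _)
  exact hexc ⟨le_antisymm hle hge, hε1⟩
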